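/- Let H be a 2-edge-connected subgraph of a 2-edge-connected graph G. Let S be a 2-edge-connected spanning subgraph of H and S' a 2-edge-connected spanning subgraph of G|H (the graph obtained by contracting V(H) to a single vertex). Then S ∪ S' (interpreting edges of S' as edges of G after decontraction) is a 2-edge-connected spanning subgraph of G. -/

import Mathlib

/-- Reachability between vertices using only edges from the edge set `A`. -/
def EReach {V : Type*} (A : Set (Sym2 V)) : V → V → Prop :=
  Relation.ReflTransGen (fun a b => s(a, b) ∈ A ∧ a ≠ b)

/-- The edge set `A` induces a 2-edge-connected graph with vertex set `W`:
all edges of `A` have both endpoints in `W`, all of `W` is connected via `A`,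
and this remains so after deleting any single edge of `A`. -/
def TwoECOn {V : Type*} (A : Set (Sym2 V)) (W : Set V) : Prop :=
  (∀ e ∈ A, ∀ v ∈ e, v ∈ W) ∧
  (∀ x ∈ W, ∀ y ∈ W, EReach A x y) ∧
  (∀ e₀ ∈ A, ∀ x ∈ W, ∀ y ∈ W, EReach (A \ {e₀}) x y)

/-- Reachability using edges of `A` in the graph obtained by contracting the vertex set `W`
to a single vertex: any two vertices of `W` are identified. -/
def EReachC {V : Type*} (A : Set (Sym2 V)) (W : Set V) : V → V → Prop :=
  Relation.ReflTransGen (fun a b => (s(a, b) ∈ A ∧ a ≠ b) ∨ (a ∈ W ∧ b ∈ W))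

/-- The edge set `A` induces a 2-edge-connected spanning subgraph of the contraction `G|W`:
after identifying `W` to one vertex, all vertices are connected via `A`,
and this remains so after deleting any single edge of `A`. -/
def TwoECC {V : Type*} (A : Set (Sym2 V)) (W : Set V) : Prop :=
  (∀ x y, EReachC A W x y) ∧ ∀ e₀ ∈ A, ∀ x y, EReachC (A \ {e₀}) W x y

/-- Let `H` (with edge set `EH` and vertex set `W`) be a 2-edge-connected subgraph of a
2-edge-connected graph `G`.  Let `S` (edge set `ES ⊆ EH`) be a 2-edge-connected spanning
subgraph of `H`, and let `S'` (edge set `ES'`, consisting of edges of `G`) be a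
2-edge-connected spanning subgraph of the contraction `G|H`.  Then `S ∪ S'`, interpreting the
edges of `S'` as edges of `G` after decontraction, is a 2-edge-connected spanning subgraph
of `G`. -/

lemma ereach_mono {V : Type*} {A B : Set (Sym2 V)} (h : A ⊆ B) {x y : V}
    (hr : EReach A x y) : EReach B x y :=
  Relation.ReflTransGen.mono (fun _ _ hab => ⟨h hab.1, hab.2⟩) _ _ hr

lemma ereach_of_ereachC {V : Type*} {A B C : Set (Sym2 V)} {W : Set V}
    (hA : A ⊆ C) (hBC : B ⊆ C)
    (hB : ∀ u ∈ W, ∀ v ∈ W, EReach B u v) {x y : V}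
    (h : EReachC A W x y) : EReach C x y := by
  induction h with
  | refl => exact Relation.ReflTransGen.refl
  | tail _ step ih =>
    rcases step with he | hw
    · exact ih.tail ⟨hA he.1, he.2⟩
    · exact ih.trans (ereach_mono hBC (hB _ hw.1 _ hw.2))

theorem stmt1 {V : Type*} (G : SimpleGraph V) (W : Set V)
    (EH ES ES' : Set (Sym2 V))
    (hG : TwoECOn G.edgeSet Set.univ)
    (hEH : EH ⊆ G.edgeSet) (hHW : ∀ e ∈ EH, ∀ v ∈ e, v ∈ W)
    (hH2 : TwoECOn EH W)
    (hSH : ES ⊆ EH) (hS2 : TwoECOn ES W)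
    (hS' : ES' ⊆ G.edgeSet) (hS'2 : TwoECC ES' W) :
    ES ∪ ES' ⊆ G.edgeSet ∧ TwoECOn (ES ∪ ES') Set.univ := by
  refine ⟨Set.union_subset (fun e he => hEH (hSH he)) hS', fun _ _ v _ => trivial, ?_, ?_⟩
  · intro x _ y _
    exact ereach_of_ereachC Set.subset_union_right Set.subset_union_left
      hS2.2.1 (hS'2.1 x y)
  · intro e₀ _ x _ y _
    have hB : ∀ u ∈ W, ∀ v ∈ W, EReach (ES \ {e₀}) u v := by
      by_cases hc : e₀ ∈ ES
      · exact hS2.2.2 e₀ hc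
      · intro u hu v hv
        exact ereach_mono (Set.subset_diff_singleton subset_rfl hc) (hS2.2.1 u hu v hv)
    have hA : EReachC (ES' \ {e₀}) W x y := by
      by_cases hc : e₀ ∈ ES'
      · exact hS'2.2 e₀ hc x y
      · exact Relation.ReflTransGen.mono
          (fun a b hab => hab.imp (fun h => ⟨⟨h.1, fun he => hc (he ▸ h.1)⟩, h.2⟩) id)
          _ _ (hS'2.1 x y)
    exact ereach_of_ereachC
      (Set.diff_subset_diff_left Set.subset_union_right)
      (Set.diff_subset_diff_left Set.subset_union_left) hB hA
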